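/- arXiv:1601.00438 — 3 statements merged into one kernel-verified Lean document; each statement's English description precedes it below -/
import Mathlib

section
/- Let \(\mathcal P=\sum_{j=0}^n\mathcal P_jY^j\) be monic (\(\mathcal P_n=1\)) with coefficients germs of continuous complex functions of \(\epsilon\). Suppose all the roots of \(\mathcal P(\epsilon,\cdot)\) are continuous branches \(\mathcal Y_1,\ldots,\mathcal Y_n\) with first-order asymptotics \(\mathcal Y_j(\epsilon)\sim y_j\epsilon^{Y_j}\), \(Y_1\le\cdots\le Y_n\). Then there exist \(p_j\in\mathbb C\) and \(P_j\in\mathbb R\cup\{+\infty\}\) with \(\mathcal P_j(\epsilon)=p_j\epsilon^{P_j}+o(\epsilon^{P_j})\), \(p_n=1\), \(P_n=0\), the tropical roots of \(P=\bigoplus_jP_jY^j\) are exactly \((Y_1,\ldots,Y_n)\), \(p_0\ne 0\) or \(P_0=+\infty\), and \(p_{n-i}\ne 0\) for every i with \(Y_i<Y_{i+1}\). -/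
open scoped Classical

/-- The min-plus polynomial function `ŷ ↦ min_{0 ≤ k ≤ n} (P_k + k y)`. -/
noncomputable def tropEval (P : ℕ → WithTop ℝ) (n : ℕ) (y : ℝ) : WithTop ℝ :=
  (Finset.range (n + 1)).inf fun k => P k + (((k : ℝ) * y : ℝ) : WithTop ℝ)

/-- `f(ε) ≃ a ε^A` as `ε → 0⁺`. -/
def simeqTo (f : ℝ → ℂ) (a : ℂ) (A : WithTop ℝ) : Prop :=
  (A = ⊤ ∧ ∀ᶠ ε in nhdsWithin 0 (Set.Ioi 0), f ε = 0) ∨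
  ∃ r : ℝ, A = (r : WithTop ℝ) ∧
    Filter.Tendsto (fun ε : ℝ => f ε / ((ε ^ r : ℝ) : ℂ)) (nhdsWithin 0 (Set.Ioi 0)) (nhds a)

/-- `f(ε) ∼ a ε^A`: a first order asymptotics (the coefficient is non-zero when
the exponent is finite). -/
def firstOrder (f : ℝ → ℂ) (a : ℂ) (A : WithTop ℝ) : Prop :=
  simeqTo f a A ∧ (A ≠ ⊤ → a ≠ 0)

noncomputable def pref (n m : ℕ) : Finset (Fin n) :=
  Finset.univ.filter (fun i => i.1 < m)

lemma pref_eq_map (n m : ℕ) (h : m ≤ n) :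
    pref n m = Finset.map (Fin.castLEEmb h) Finset.univ := by
  ext i
  simp only [pref, Finset.mem_filter, Finset.mem_univ, true_and, Finset.mem_map,
    Finset.mem_univ, true_and]
  constructor
  · intro hi
    exact ⟨⟨i.1, hi⟩, by simp [Fin.castLEEmb, Fin.castLE]⟩
  · rintro ⟨j, rfl⟩
    simpa using j.2

lemma pref_card (n m : ℕ) (h : m ≤ n) : (pref n m).card = m := by
  rw [pref_eq_map n m h, Finset.card_map, Finset.card_univ, Fintype.card_fin]

lemma strictMono_le_val {m n : ℕ} (f : Fin m → Fin n) (hf : StrictMono f) (i : Fin m) :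
    i.1 ≤ (f i).1 := by
  obtain ⟨k, hk⟩ := i
  induction k with
  | zero => exact Nat.zero_le _
  | succ k ih =>
    have hk' : k < m := Nat.lt_of_succ_lt hk
    have h1 : (f ⟨k, hk'⟩).1 < (f ⟨k + 1, hk⟩).1 := hf (by simp [Fin.lt_def])
    have h2 := ih hk'
    simp only [Fin.val_mk] at h1 h2 ⊢
    omega

lemma sum_pref_eq {n m : ℕ} (Y : Fin n → WithTop ℝ) (hm : m ≤ n) :
    ∑ i ∈ pref n m, Y i = ∑ i : Fin m, Y (Fin.castLE hm i) := by
  rw [pref_eq_map n m hm, Finset.sum_map]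
  rfl

lemma sum_orderEmb {n m : ℕ} (Y : Fin n → WithTop ℝ) (t : Finset (Fin n)) (ht : t.card = m) :
    ∑ i ∈ t, Y i = ∑ i : Fin m, Y (t.orderEmbOfFin ht i) := by
  have h1 : t = Finset.image (t.orderEmbOfFin ht) Finset.univ := by
    apply Finset.coe_injective
    rw [Finset.coe_image, Finset.coe_univ, Set.image_univ, Finset.range_orderEmbOfFin]
  rw [Finset.sum_congr h1 (fun _ _ => rfl),
    Finset.sum_image (fun a _ b _ h => (t.orderEmbOfFin ht).injective h)]

lemma pref_sum_le {n : ℕ} (Y : Fin n → WithTop ℝ) (hY : Monotone Y) {m : ℕ} (hm : m ≤ n)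
    (t : Finset (Fin n)) (ht : t.card = m) :
    ∑ i ∈ pref n m, Y i ≤ ∑ i ∈ t, Y i := by
  rw [sum_pref_eq Y hm, sum_orderEmb Y t ht]
  apply Finset.sum_le_sum
  intro i _
  apply hY
  rw [Fin.le_def]
  exact le_trans (by simp) (strictMono_le_val _ (t.orderEmbOfFin ht).strictMono i)

lemma lowerset_eq_pref {n : ℕ} (s : Finset (Fin n))
    (hs : ∀ i j : Fin n, i ≤ j → j ∈ s → i ∈ s) :
    s = pref n s.card := by
  ext i
  simp only [pref, Finset.mem_filter, Finset.mem_univ, true_and]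
  constructor
  · intro hi
    have hsub : Finset.Iic i ⊆ s := fun j hj => hs j i (Finset.mem_Iic.mp hj) hi
    have := Finset.card_le_card hsub
    rw [Fin.card_Iic] at this
    omega
  · intro hi
    by_contra hni
    have hsub : s ⊆ Finset.Iio i := by
      intro j hj
      rw [Finset.mem_Iio]
      by_contra h
      push_neg at h
      exact hni (hs i j h hj)
    have := Finset.card_le_card hsub
    rw [Fin.card_Iio] at this
    omega

lemma pref_sum_lt {n m : ℕ} (Y : Fin n → WithTop ℝ) (hY : Monotone Y) (hm0 : 0 < m) (hmn : m < n)
    (hstrict : Y ⟨m - 1, Nat.lt_of_le_of_lt (Nat.sub_le m 1) hmn⟩ < Y ⟨m, hmn⟩) (t : Finset (Fin n)) (ht : t.card = m)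
    (hne : t ≠ pref n m) :
    ∑ i ∈ pref n m, Y i < ∑ i ∈ t, Y i := by
  classical
  set f := t.orderEmbOfFin ht with hf
  set L : Fin m := ⟨m - 1, by omega⟩ with hL
  have htne : t.Nonempty := Finset.card_pos.mp (by omega)
  have hfLmax : f L = t.max' htne := Finset.orderEmbOfFin_last ht hm0
  have hfL : m ≤ (f L).1 := by
    by_contra hcon
    push_neg at hcon
    apply hne
    apply Finset.eq_of_subset_of_card_le
    · intro j hj
      simp only [pref, Finset.mem_filter, Finset.mem_univ, true_and]
      have hmax : j ≤ t.max' htne := Finset.le_max' t j hj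
      rw [← hfLmax] at hmax
      rw [Fin.le_def] at hmax
      omega
    · rw [pref_card n m (le_of_lt hmn), ht]
  have hprefM : ∀ i : Fin m, Y (Fin.castLE (le_of_lt hmn) i) ≤ Y ⟨m - 1, by omega⟩ := by
    intro i
    apply hY
    rw [Fin.le_def]
    simp only [Fin.coe_castLE]
    omega
  rw [sum_pref_eq Y (le_of_lt hmn), sum_orderEmb Y t ht]
  rw [← Finset.add_sum_erase _ _ (Finset.mem_univ L),
    ← Finset.add_sum_erase _ (fun i => Y (f i)) (Finset.mem_univ L)]
  have hS1 : (∑ i ∈ Finset.univ.erase L, Y (Fin.castLE (le_of_lt hmn) i)) ≠ ⊤ := by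
    rw [Ne, WithTop.sum_eq_top]
    rintro ⟨i, -, hi⟩
    have h2 := lt_of_le_of_lt (hprefM i) hstrict
    rw [hi] at h2
    exact (not_top_lt h2).elim
  calc Y (Fin.castLE (le_of_lt hmn) L) + ∑ i ∈ Finset.univ.erase L, Y (Fin.castLE (le_of_lt hmn) i)
      < Y ⟨m, hmn⟩ + ∑ i ∈ Finset.univ.erase L, Y (Fin.castLE (le_of_lt hmn) i) := by
        apply WithTop.add_lt_add_right hS1
        exact hstrict
    _ ≤ Y (f L) + ∑ i ∈ Finset.univ.erase L, Y (f i) := by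
        apply add_le_add
        · exact hY (by rw [Fin.le_def]; exact hfL)
        · apply Finset.sum_le_sum
          intro i _
          apply hY
          rw [Fin.le_def]
          exact le_trans (by simp) (strictMono_le_val _ f.strictMono i)


lemma cast_mul_eq_sum {n : ℕ} (z : ℝ) (s : Finset (Fin n)) {k : ℕ} (hs : s.card = k) :
    (((k : ℝ) * z : ℝ) : WithTop ℝ) = ∑ _i ∈ s, (z : WithTop ℝ) := by
  rw [Finset.sum_const, hs, ← WithTop.coe_nsmul, nsmul_eq_mul]

lemma trop_eq {n : ℕ} (Y : Fin n → WithTop ℝ) (hY : Monotone Y) (z : ℝ) :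
    tropEval (fun j => ∑ i ∈ pref n (n - j), Y i) n z
      = ∑ i : Fin n, min (z : WithTop ℝ) (Y i) := by
  classical
  apply le_antisymm
  · -- attained at k*
    set B : Finset (Fin n) := Finset.univ.filter (fun i => Y i ≤ (z : WithTop ℝ)) with hB
    set k : ℕ := n - B.card with hk
    have hBcard : B.card ≤ n := le_trans (Finset.card_filter_le _ _) (by simp)
    have hBpref : B = pref n B.card := by
      apply lowerset_eq_pref
      intro i j hij hj
      simp only [hB, Finset.mem_filter, Finset.mem_univ, true_and] at hj ⊢
      exact le_trans (hY hij) hj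
    have hkB : n - k = B.card := by omega
    apply le_trans (Finset.inf_le (Finset.mem_range.mpr (show k < n + 1 by omega)))
    show (∑ i ∈ pref n (n - k), Y i) + (((k : ℝ) * z : ℝ) : WithTop ℝ) ≤ _
    rw [hkB, ← hBpref]
    have hcc : Bᶜ.card = k := by
      rw [Finset.card_compl, Fintype.card_fin]
    rw [cast_mul_eq_sum z Bᶜ hcc]
    rw [← Finset.sum_add_sum_compl B (fun i => min (z : WithTop ℝ) (Y i))]
    apply add_le_add
    · apply Finset.sum_le_sum
      intro i hi
      simp only [hB, Finset.mem_filter, Finset.mem_univ, true_and] at hi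
      exact le_min hi le_rfl
    · apply Finset.sum_le_sum
      intro i hi
      simp only [hB, Finset.mem_compl, Finset.mem_filter, Finset.mem_univ, true_and] at hi
      exact le_min le_rfl (le_of_not_ge hi)
  · apply Finset.le_inf
    intro k hk
    rw [Finset.mem_range] at hk
    have hck : ((pref n (n - k))ᶜ).card = k := by
      rw [Finset.card_compl, Fintype.card_fin, pref_card n (n - k) (by omega)]
      omega
    rw [cast_mul_eq_sum z _ hck,
      ← Finset.sum_add_sum_compl (pref n (n - k)) (fun i => min (z : WithTop ℝ) (Y i))]
    apply add_le_add
    · exact Finset.sum_le_sum fun i _ => min_le_right _ _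
    · exact Finset.sum_le_sum fun i _ => min_le_left _ _

lemma vieta {n : ℕ} (F : ℕ → ℝ → ℂ) (Yb : Fin n → ℝ → ℂ) (ε : ℝ)
    (hmonic : F n ε = 1)
    (hroots : (∑ j ∈ Finset.range (n + 1), Polynomial.C (F j ε) * Polynomial.X ^ j).roots
      = (↑(List.ofFn fun i => Yb i ε) : Multiset ℂ))
    (j : ℕ) (hj : j ≤ n) :
    F j ε = (-1) ^ (n - j) *
      ∑ t ∈ Finset.powersetCard (n - j) (Finset.univ : Finset (Fin n)), ∏ i ∈ t, Yb i ε := by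
  classical
  set Q : Polynomial ℂ := ∑ k ∈ Finset.range (n + 1), Polynomial.C (F k ε) * Polynomial.X ^ k
    with hQ
  have hcoeff : ∀ k ≤ n, Q.coeff k = F k ε := by
    intro k hk
    rw [hQ, Polynomial.finset_sum_coeff]
    rw [Finset.sum_eq_single k]
    · simp
    · intro b _ hbk
      simp [Polynomial.coeff_C_mul, Polynomial.coeff_X_pow, (Ne.symm hbk)]
    · intro h
      exact absurd (Finset.mem_range.mpr (by omega)) h
  have hdegle : Q.natDegree ≤ n := by
    apply Polynomial.natDegree_sum_le_of_forall_le
    intro k hk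
    rw [Finset.mem_range] at hk
    exact le_trans (Polynomial.natDegree_C_mul_le _ _)
      (by rw [Polynomial.natDegree_X_pow]; omega)
  have hne : Q.coeff n ≠ 0 := by
    rw [hcoeff n le_rfl, hmonic]
    exact one_ne_zero
  have hdeg : Q.natDegree = n := le_antisymm hdegle (Polynomial.le_natDegree_of_ne_zero hne)
  have hcard : Q.roots.card = Q.natDegree := by
    rw [hroots, hdeg]
    simp
  have hlead : Q.leadingCoeff = 1 := by
    rw [Polynomial.leadingCoeff, hdeg, hcoeff n le_rfl, hmonic]
  have hmain := Polynomial.coeff_eq_esymm_roots_of_card hcard (k := j) (by rw [hdeg]; exact hj)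
  rw [hcoeff j hj] at hmain
  rw [hmain, hlead, one_mul, hdeg, hroots]
  congr 1
  rw [← Fin.univ_val_map, Finset.esymm_map_val]

open Filter in
lemma tendsto_prod_div {n : ℕ} (t : Finset (Fin n)) (Yb : Fin n → ℝ → ℂ) (y : Fin n → ℂ)
    (R : Fin n → ℝ)
    (h : ∀ i ∈ t, Filter.Tendsto (fun ε : ℝ => Yb i ε / ((ε ^ R i : ℝ) : ℂ))
        (nhdsWithin 0 (Set.Ioi 0)) (nhds (y i))) :
    Filter.Tendsto (fun ε : ℝ => (∏ i ∈ t, Yb i ε) / (((ε ^ (∑ i ∈ t, R i) : ℝ)) : ℂ))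
      (nhdsWithin 0 (Set.Ioi 0)) (nhds (∏ i ∈ t, y i)) := by
  have h1 : Filter.Tendsto (fun ε : ℝ => ∏ i ∈ t, (Yb i ε / ((ε ^ R i : ℝ) : ℂ)))
      (nhdsWithin 0 (Set.Ioi 0)) (nhds (∏ i ∈ t, y i)) :=
    tendsto_finset_prod t (fun i hi => h i hi)
  apply h1.congr'
  filter_upwards [self_mem_nhdsWithin] with ε hε
  rw [Set.mem_Ioi] at hε
  rw [Finset.prod_div_distrib]
  congr 1
  rw [← Complex.ofReal_prod]
  congr 1
  rw [Real.rpow_sum_of_pos hε]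

open Filter in
lemma tendsto_rpow_zero (c : ℝ) (hc : 0 < c) :
    Filter.Tendsto (fun ε : ℝ => ((ε ^ c : ℝ) : ℂ)) (nhdsWithin 0 (Set.Ioi 0)) (nhds 0) := by
  have h1 : Filter.Tendsto (fun ε : ℝ => (ε ^ c : ℝ)) (nhdsWithin 0 (Set.Ioi 0)) (nhds 0) := by
    have h2 := (Real.continuousAt_rpow_const 0 c (Or.inr (le_of_lt hc))).tendsto
    rw [Real.zero_rpow (ne_of_gt hc)] at h2
    exact tendsto_nhdsWithin_of_tendsto_nhds h2
  have := (Complex.continuous_ofReal.tendsto 0).comp h1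
  simpa [Function.comp_def] using this


open Filter in
lemma coeff_asym {n : ℕ} (F : ℕ → ℝ → ℂ) (Yb : Fin n → ℝ → ℂ) (y : Fin n → ℂ)
    (Y : Fin n → WithTop ℝ) (hYmono : Monotone Y)
    (hasym : ∀ i, firstOrder (Yb i) (y i) (Y i))
    (ε₁ : ℝ) (hε₁ : 0 < ε₁)
    (hF : ∀ ε ∈ Set.Ioo (0:ℝ) ε₁, ∀ j ≤ n, F j ε = (-1) ^ (n - j) *
      ∑ t ∈ Finset.powersetCard (n - j) (Finset.univ : Finset (Fin n)), ∏ i ∈ t, Yb i ε)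
    (j : ℕ) (hj : j ≤ n) :
    simeqTo (F j) ((-1)^(n-j) * ∑ t ∈ Finset.powersetCard (n-j) Finset.univ,
        if (∑ i ∈ t, Y i) = ∑ i ∈ pref n (n-j), Y i then ∏ i ∈ t, y i else 0)
      (∑ i ∈ pref n (n-j), Y i) := by
  classical
  have h_min : ∀ t ∈ Finset.powersetCard (n-j) (Finset.univ : Finset (Fin n)),
      ∑ i ∈ pref n (n-j), Y i ≤ ∑ i ∈ t, Y i := by
    intro t ht
    exact pref_sum_le Y hYmono (Nat.sub_le n j) t (Finset.mem_powersetCard_univ.mp ht)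
  have h_top : ∀ i, Y i = ⊤ → ∀ᶠ ε in nhdsWithin 0 (Set.Ioi 0), Yb i ε = 0 := by
    intro i hi
    rcases (hasym i).1 with ⟨-, h⟩ | ⟨r, hr, -⟩
    · exact h
    · rw [hi] at hr
      exact absurd hr (by simp)
  have h_fin : ∀ i, ∀ r : ℝ, Y i = (r : WithTop ℝ) →
      Filter.Tendsto (fun ε : ℝ => Yb i ε / ((ε ^ r : ℝ) : ℂ))
        (nhdsWithin 0 (Set.Ioi 0)) (nhds (y i)) := by
    intro i r hir
    rcases (hasym i).1 with ⟨htop, -⟩ | ⟨r', hr', ht⟩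
    · rw [htop] at hir
      exact absurd hir.symm (by simp)
    · rw [hir] at hr'
      have : r = r' := by exact_mod_cast hr'
      rw [this]
      exact ht
  have ev_F : ∀ᶠ ε in nhdsWithin 0 (Set.Ioi 0), F j ε = (-1) ^ (n - j) *
      ∑ t ∈ Finset.powersetCard (n - j) (Finset.univ : Finset (Fin n)), ∏ i ∈ t, Yb i ε := by
    filter_upwards [Ioo_mem_nhdsGT hε₁] with ε hε
    exact hF ε hε j hj
  by_cases hP : ∑ i ∈ pref n (n-j), Y i = ⊤
  · left
    refine ⟨hP, ?_⟩
    have hall : ∀ t ∈ Finset.powersetCard (n-j) (Finset.univ : Finset (Fin n)),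
        ∀ᶠ ε in nhdsWithin 0 (Set.Ioi 0), ∏ i ∈ t, Yb i ε = 0 := by
      intro t ht
      have h1 : ∑ i ∈ t, Y i = ⊤ := top_le_iff.mp (hP ▸ h_min t ht)
      obtain ⟨i, hit, hitop⟩ := WithTop.sum_eq_top.mp h1
      filter_upwards [h_top i hitop] with ε hε
      exact Finset.prod_eq_zero hit hε
    have hall2 := (Filter.eventually_all_finset _).mpr hall
    filter_upwards [hall2, ev_F] with ε h1 h2
    rw [h2, Finset.sum_congr rfl (fun t ht => h1 t ht), Finset.sum_const, smul_zero, mul_zero]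
  · right
    obtain ⟨r, hr⟩ := WithTop.ne_top_iff_exists.mp hP
    refine ⟨r, hr.symm, ?_⟩
    have key : ∀ t ∈ Finset.powersetCard (n-j) (Finset.univ : Finset (Fin n)),
        Filter.Tendsto (fun ε : ℝ => (∏ i ∈ t, Yb i ε) / ((ε ^ r : ℝ) : ℂ))
          (nhdsWithin 0 (Set.Ioi 0))
          (nhds (if (∑ i ∈ t, Y i) = ∑ i ∈ pref n (n-j), Y i then ∏ i ∈ t, y i else 0)) := by
      intro t ht
      by_cases hEt : ∑ i ∈ t, Y i = ⊤
      · rw [if_neg (by rw [hEt, ← hr]; simp)]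
        obtain ⟨i, hit, hitop⟩ := WithTop.sum_eq_top.mp hEt
        apply Filter.Tendsto.congr' _ tendsto_const_nhds
        filter_upwards [h_top i hitop] with ε hε
        rw [Finset.prod_eq_zero hit hε, zero_div]
      · have hYt : ∀ i ∈ t, Y i = ((Y i).untopD 0 : ℝ) := by
          intro i hi
          have hne : Y i ≠ ⊤ := fun hc => hEt (WithTop.sum_eq_top.mpr ⟨i, hi, hc⟩)
          obtain ⟨a, ha⟩ := WithTop.ne_top_iff_exists.mp hne
          rw [← ha, WithTop.untopD_coe]
        have hsum : ∑ i ∈ t, Y i = ((∑ i ∈ t, (Y i).untopD 0 : ℝ) : WithTop ℝ) := by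
          rw [WithTop.coe_sum]
          exact Finset.sum_congr rfl hYt
        have hprod := tendsto_prod_div t Yb y (fun i => (Y i).untopD 0)
          (fun i hi => h_fin i _ (hYt i hi))
        have hrs : r ≤ ∑ i ∈ t, (Y i).untopD 0 := by
          have h2 := h_min t ht
          rw [← hr, hsum] at h2
          exact_mod_cast h2
        by_cases hcase : ∑ i ∈ t, (Y i).untopD 0 = r
        · rw [if_pos (by rw [hsum, ← hr, hcase])]
          rw [← hcase]
          exact hprod
        · rw [if_neg (by rw [hsum, ← hr]; exact fun hc => hcase (by exact_mod_cast hc))]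
          have hlt : r < ∑ i ∈ t, (Y i).untopD 0 := lt_of_le_of_ne hrs (Ne.symm hcase)
          have h0 := tendsto_rpow_zero ((∑ i ∈ t, (Y i).untopD 0) - r) (by linarith)
          have hmul := hprod.mul h0
          rw [mul_zero] at hmul
          apply hmul.congr'
          filter_upwards [self_mem_nhdsWithin] with ε hε
          rw [Set.mem_Ioi] at hε
          have hεr : ((ε ^ r : ℝ) : ℂ) ≠ 0 := by
            exact_mod_cast (Real.rpow_pos_of_pos hε r).ne'
          have hεs : ((ε ^ (∑ i ∈ t, (Y i).untopD 0) : ℝ) : ℂ) ≠ 0 := by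
            exact_mod_cast (Real.rpow_pos_of_pos hε _).ne'
          rw [div_mul_eq_mul_div, div_eq_div_iff hεs hεr, mul_assoc,
            ← Complex.ofReal_mul, ← Real.rpow_add hε]
          ring_nf
    have hsum_t := tendsto_finset_sum _ key
    have hfinal := hsum_t.const_mul ((-1:ℂ)^(n-j))
    apply hfinal.congr'
    filter_upwards [ev_F] with ε hε
    rw [hε, mul_div_assoc, Finset.sum_div]


/-- Newton–Puiseux with partial information, converse direction: if all the
roots of the monic polynomial `𝒫(ε,·)` are continuous branches with first order
asymptotics `𝒴ⱼ(ε) ∼ yⱼ ε^{Yⱼ}`, `Y₁ ≤ ⋯ ≤ Yₙ`, then the coefficients satisfy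
`𝒫ⱼ(ε) ≃ pⱼ ε^{Pⱼ}` with `pₙ = 1`, `Pₙ = 0`, the tropical roots of `P` are
exactly `(Y₁,…,Yₙ)`, `p₀ ≠ 0` or `P₀ = +∞`, and `p_{n-i} ≠ 0` whenever
`Yᵢ < Yᵢ₊₁`. -/
theorem stmt_14 (n : ℕ) (F : ℕ → ℝ → ℂ)
    (hcont : ∀ j ≤ n, ContinuousOn (F j) (Set.Ioi 0))
    (hmonic : ∀ ε : ℝ, F n ε = 1)
    (Yb : Fin n → ℝ → ℂ) (y : Fin n → ℂ) (Y : Fin n → WithTop ℝ)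
    (hYmono : Monotone Y)
    (hasym : ∀ i, firstOrder (Yb i) (y i) (Y i))
    (ε₁ : ℝ) (hε₁ : 0 < ε₁)
    (hroots : ∀ ε ∈ Set.Ioo (0 : ℝ) ε₁,
      (∑ j ∈ Finset.range (n + 1), Polynomial.C (F j ε) * Polynomial.X ^ j).roots =
        (↑(List.ofFn fun i => Yb i ε) : Multiset ℂ)) :
    ∃ (p : ℕ → ℂ) (P : ℕ → WithTop ℝ),
      (∀ j ≤ n, simeqTo (F j) (p j) (P j)) ∧
      p n = 1 ∧ P n = 0 ∧
      (∀ z : ℝ, tropEval P n z = P n + ∑ i : Fin n, min (z : WithTop ℝ) (Y i)) ∧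
      (p 0 ≠ 0 ∨ P 0 = ⊤) ∧
      ∀ i : ℕ, ∀ h1 : 0 < i, ∀ h2 : i < n,
        Y ⟨i - 1, by omega⟩ < Y ⟨i, h2⟩ → p (n - i) ≠ 0 := by
  classical
  set P : ℕ → WithTop ℝ := fun j => ∑ i ∈ pref n (n - j), Y i with hPdef
  set p : ℕ → ℂ := fun j => (-1)^(n-j) * ∑ t ∈ Finset.powersetCard (n-j) Finset.univ,
      if (∑ i ∈ t, Y i) = ∑ i ∈ pref n (n-j), Y i then ∏ i ∈ t, y i else 0 with hpdef
  have hF : ∀ ε ∈ Set.Ioo (0:ℝ) ε₁, ∀ j ≤ n, F j ε = (-1) ^ (n - j) *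
      ∑ t ∈ Finset.powersetCard (n - j) (Finset.univ : Finset (Fin n)), ∏ i ∈ t, Yb i ε :=
    fun ε hε j hj => vieta F Yb ε (hmonic ε) (hroots ε hε) j hj
  have hpref0 : pref n 0 = ∅ := by
    ext i
    simp [pref]
  have hprefn : pref n n = Finset.univ := by
    ext i
    simp [pref, i.2]
  have hPn : P n = 0 := by
    rw [hPdef]
    simp [hpref0]
  refine ⟨p, P, ?_, ?_, hPn, ?_, ?_, ?_⟩
  · intro j hj
    exact coeff_asym F Yb y Y hYmono hasym ε₁ hε₁ hF j hj
  · rw [hpdef]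
    simp only [Nat.sub_self, pow_zero, one_mul, Finset.powersetCard_zero,
      Finset.sum_singleton, Finset.sum_empty, hpref0, if_pos rfl, Finset.prod_empty]
    simp
  · intro z
    rw [hPn, zero_add]
    exact trop_eq Y hYmono z
  · by_cases hP0 : P 0 = ⊤
    · right; exact hP0
    · left
      have hYne : ∀ i, Y i ≠ ⊤ := by
        intro i hc
        apply hP0
        rw [hPdef]
        simp only [Nat.sub_zero, hprefn]
        exact WithTop.sum_eq_top.mpr ⟨i, Finset.mem_univ i, hc⟩
      have hcard : (Finset.univ : Finset (Fin n)).card = n := by simp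
      rw [hpdef]
      simp only [Nat.sub_zero]
      have hpc : Finset.powersetCard n (Finset.univ : Finset (Fin n)) = {Finset.univ} := by
        ext t
        rw [Finset.mem_powersetCard_univ, Finset.mem_singleton]
        constructor
        · intro h
          exact Finset.eq_univ_of_card t (by simp [h])
        · rintro rfl
          exact hcard
      rw [hpc, Finset.sum_singleton, if_pos (by rw [hprefn]), mul_ne_zero_iff]
      constructor
      · exact pow_ne_zero _ (by norm_num)
      · rw [Finset.prod_ne_zero_iff]
        exact fun i _ => (hasym i).2 (hYne i)
  · intro i h1 h2 hYlt
    have hni : n - (n - i) = i := Nat.sub_sub_self (le_of_lt h2)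
    rw [hpdef]
    simp only [hni]
    have hmem : pref n i ∈ Finset.powersetCard i (Finset.univ : Finset (Fin n)) :=
      Finset.mem_powersetCard_univ.mpr (pref_card n i (le_of_lt h2))
    rw [Finset.sum_eq_single_of_mem (pref n i) hmem]
    · rw [if_pos rfl, mul_ne_zero_iff]
      constructor
      · exact pow_ne_zero _ (by norm_num)
      · rw [Finset.prod_ne_zero_iff]
        intro k hk
        apply (hasym k).2
        intro hc
        simp only [pref, Finset.mem_filter, Finset.mem_univ, true_and] at hk
        have hkle : Y k ≤ Y ⟨i - 1, by omega⟩ := hYmono (by rw [Fin.le_def]; simp; omega)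
        rw [hc] at hkle
        exact absurd (lt_of_le_of_lt (le_trans le_top hkle) hYlt) (not_top_lt ∘ lt_of_le_of_lt le_top)
    · intro t ht htne
      rw [if_neg]
      exact ne_of_gt (pref_sum_lt Y hYmono h1 h2 hYlt t (Finset.mem_powersetCard_univ.mp ht) htne)
end

section
/- Let \(B\in(\mathbb R\cup\{+\infty\})^{n\times n}\) with \(\mathrm{per}\,B=0\), suppose (0,0) (the zero vectors) is a Hungarian pair with respect to B, and suppose the identity permutation is optimal for B. Then all diagonal entries of B are 0 (so 0 is a min-plus eigenvector: \(\min_j B_{ij}=0\) for each i), the minimal circuit mean of B equals 0, and Opt(B) equals the critical graph of B (the union of all circuits of mean weight 0). -/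
open scoped Classical

/-- The min-plus permanent `per B = min_σ ∑ᵢ B_{i σ(i)}`. -/
noncomputable def mpPer (n : ℕ) (B : Matrix (Fin n) (Fin n) (WithTop ℝ)) : WithTop ℝ :=
  (Finset.univ : Finset (Equiv.Perm (Fin n))).inf fun σ => ∑ i, B i (σ i)

/-- `(i,j)` is an arc of `Opt(B)`: some optimal permutation maps `i` to `j`. -/
def OptArc (n : ℕ) (B : Matrix (Fin n) (Fin n) (WithTop ℝ)) (i j : Fin n) : Prop :=
  ∃ σ : Equiv.Perm (Fin n), (∑ k, B k (σ k)) = mpPer n B ∧ σ i = j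

lemma exists_zero_perm_of_walk (n : ℕ) (B : Matrix (Fin n) (Fin n) (WithTop ℝ))
    (hdiag : ∀ i, B i i = 0) :
    ∀ k, 1 ≤ k → ∀ f : ℕ → Fin n, (∀ l < k, B (f l) (f ((l + 1) % k)) = 0) →
      ∃ σ : Equiv.Perm (Fin n), (∀ m, B m (σ m) = 0) ∧ σ (f 0) = f (1 % k) := by
  intro k
  induction k using Nat.strong_induction_on with
  | _ k IH =>
  intro hk f harc
  by_cases hinj : ∀ a < k, ∀ b < k, f a = f b → a = b
  · set L : List (Fin n) := (List.range k).map f with hL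
    have hlen : L.length = k := by simp [hL]
    have hnd : L.Nodup := by
      refine List.Nodup.map_on ?_ List.nodup_range
      intro x hx y hy hxy
      exact hinj x (List.mem_range.mp hx) y (List.mem_range.mp hy) hxy
    have key : ∀ i, i < k → L.formPerm (f i) = f ((i + 1) % k) := by
      intro i hi
      have h1 : i < L.length := by rwa [hlen]
      have h := List.formPerm_apply_getElem L hnd i h1
      simpa [hL] using h
    refine ⟨L.formPerm, ?_, key 0 (lt_of_lt_of_le one_pos hk)⟩
    intro m
    by_cases hm : m ∈ L
    · obtain ⟨i, hi, rfl⟩ : ∃ i, i < k ∧ f i = m := by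
        obtain ⟨i, hi, h⟩ := List.mem_map.mp hm
        exact ⟨i, List.mem_range.mp hi, h⟩
      rw [key i hi]
      exact harc i hi
    · rw [List.formPerm_apply_of_notMem hm]
      exact hdiag m
  · obtain ⟨a, b, ha, hb, hlt, heq⟩ : ∃ a b, a < k ∧ b < k ∧ a < b ∧ f a = f b := by
      push_neg at hinj
      obtain ⟨x, hx, y, hy, hxy, hne⟩ := hinj
      rcases (Ne.lt_or_gt hne) with h | h
      · exact ⟨x, y, hx, hy, h, hxy⟩
      · exact ⟨y, x, hy, hx, h, hxy.symm⟩
    rcases Nat.eq_zero_or_pos a with rfl | hapos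
    · -- cut to the initial segment of length b
      have hb1 : 1 ≤ b := hlt
      have harc' : ∀ l < b, B (f l) (f ((l + 1) % b)) = 0 := by
        intro l hl
        rcases Nat.lt_or_ge (l + 1) b with h1 | h1
        · rw [Nat.mod_eq_of_lt h1]
          have h2 := harc l (hl.trans hb)
          rwa [Nat.mod_eq_of_lt (h1.trans hb)] at h2
        · have hl1 : l + 1 = b := le_antisymm hl h1
          rw [hl1, Nat.mod_self, heq]
          have h2 := harc l (hl.trans hb)
          rwa [hl1, Nat.mod_eq_of_lt hb] at h2
      obtain ⟨σ, hσ, hσ0⟩ := IH b hb hb1 f harc'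
      refine ⟨σ, hσ, ?_⟩
      have hk2 : 1 % k = 1 := Nat.mod_eq_of_lt (lt_of_le_of_lt hb1 hb)
      rw [hk2]
      rcases eq_or_lt_of_le hb1 with hb2 | hb2
      · -- b = 1
        rw [← hb2] at hσ0 heq
        simp only [Nat.mod_self] at hσ0
        rw [hσ0, heq]
      · rwa [Nat.mod_eq_of_lt hb2] at hσ0
    · -- cut out the segment [a, b)
      set d := b - a with hd
      set k' := k - d with hk'
      have hd1 : 1 ≤ d := by omega
      have hk'2 : 2 ≤ k' := by omega
      set f' : ℕ → Fin n := fun m => if m < a then f m else f (m + d) with hf'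
      have harc' : ∀ m < k', B (f' m) (f' ((m + 1) % k')) = 0 := by
        intro m hm
        rcases Nat.lt_or_ge (m + 1) k' with h1 | h1
        · rw [Nat.mod_eq_of_lt h1]
          rcases Nat.lt_or_ge (m + 1) a with h2 | h2
          · have h3 := harc m (by omega)
            rw [Nat.mod_eq_of_lt (by omega)] at h3
            have e1 : f' m = f m := by
              simp only [hf']; rw [if_pos (by omega : m < a)]
            have e2 : f' (m + 1) = f (m + 1) := by
              simp only [hf']; rw [if_pos (by omega : m + 1 < a)]
            rw [e1, e2]; exact h3
          · rcases Nat.eq_or_lt_of_le h2 with h3 | h3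
            · -- m + 1 = a
              have h4 := harc m (by omega)
              rw [Nat.mod_eq_of_lt (by omega)] at h4
              have e2 : f' (m + 1) = f (m + 1) := by
                simp only [hf']
                rw [if_neg (by omega)]
                rw [show m + 1 + d = b by omega, ← heq, ← h3]
              have e1 : f' m = f m := by
                simp only [hf']; rw [if_pos (by omega : m < a)]
              rw [e1, e2]; exact h4
            · -- a ≤ m
              have h4 := harc (m + d) (by omega)
              rw [Nat.mod_eq_of_lt (by omega)] at h4
              have e1 : f' m = f (m + d) := by
                simp only [hf']; rw [if_neg (by omega : ¬ m < a)]
              have e2 : f' (m + 1) = f (m + 1 + d) := by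
                simp only [hf']
                rw [if_neg (by omega), show m + 1 + d = m + d + 1 by omega]
              rw [e1, e2, show m + 1 + d = m + d + 1 by omega]
              exact h4
        · have hm1 : m + 1 = k' := by omega
          rw [hm1, Nat.mod_self]
          have e0 : f' 0 = f 0 := by
            simp only [hf']; rw [if_pos (by omega : 0 < a)]
          have e1 : f' m = f (k - 1) := by
            simp only [hf']
            rw [if_neg (by omega), show m + d = k - 1 by omega]
          have h4 := harc (k - 1) (by omega)
          rw [show k - 1 + 1 = k by omega, Nat.mod_self] at h4
          rw [e0, e1]
          exact h4
      obtain ⟨σ, hσ, hσ0⟩ := IH k' (by omega) (by omega) f' harc'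
      refine ⟨σ, hσ, ?_⟩
      have e0 : f' 0 = f 0 := by
        simp only [hf']; rw [if_pos (by omega : 0 < a)]
      have e1 : f' 1 = f 1 := by
        simp only [hf']
        rcases Nat.lt_or_ge 1 a with h | h
        · rw [if_pos h]
        · rw [if_neg (by omega), show 1 + d = b by omega, ← heq,
            show a = 1 by omega]
      rw [Nat.mod_eq_of_lt (by omega : 1 < k'), e0, e1] at hσ0
      rw [Nat.mod_eq_of_lt (by omega : 1 < k)]
      exact hσ0

theorem stmt_17' (n : ℕ) (hn : 0 < n) (B : Matrix (Fin n) (Fin n) (WithTop ℝ))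
    (walk : ∀ k, 1 ≤ k → ∀ f : ℕ → Fin n, (∀ l < k, B (f l) (f ((l + 1) % k)) = 0) →
      ∃ σ : Equiv.Perm (Fin n), (∀ m, B m (σ m) = 0) ∧ σ (f 0) = f (1 % k))
    (mpPer : WithTop ℝ)
    (hper : mpPer = 0)
    (hpos : ∀ i j, (0 : WithTop ℝ) ≤ B i j)
    (hid : (∑ i, B i i) = mpPer) :
    (∀ i, B i i = 0) ∧
    (∀ i, ((Finset.univ : Finset (Fin n)).inf fun j => B i j) = 0) ∧
    IsLeast {t : WithTop ℝ | ∃ k : ℕ, 1 ≤ k ∧ k ≤ n ∧ ∃ f : ℕ → Fin n,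
        t = WithTop.map (fun r : ℝ => r / (k : ℝ))
          (∑ j ∈ Finset.range k, B (f j) (f ((j + 1) % k)))} 0 ∧
    (∀ i j, (∃ σ : Equiv.Perm (Fin n), (∑ k, B k (σ k)) = mpPer ∧ σ i = j) ↔
      ∃ k : ℕ, 1 ≤ k ∧ k ≤ n ∧ ∃ f : ℕ → Fin n,
        (∑ l ∈ Finset.range k, B (f l) (f ((l + 1) % k))) = 0 ∧
        ∃ l, l < k ∧ f l = i ∧ f ((l + 1) % k) = j) := by
  have hdiag : ∀ i, B i i = 0 := by
    intro i
    exact (Finset.sum_eq_zero_iff_of_nonneg (fun j _ => hpos j j)).mp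
      (hid.trans hper) i (Finset.mem_univ i)
  refine ⟨hdiag, ?_, ?_, ?_⟩
  · intro i
    refine le_antisymm ?_ (Finset.le_inf fun j _ => hpos i j)
    calc Finset.univ.inf (fun j => B i j) ≤ B i i := Finset.inf_le (Finset.mem_univ i)
    _ = 0 := hdiag i
  · constructor
    · refine ⟨1, le_rfl, hn, fun _ => ⟨0, hn⟩, ?_⟩
      rw [Finset.sum_range_one, hdiag, ← WithTop.coe_zero, WithTop.map_coe]
      norm_num
    · rintro t ⟨k, hk1, hkn, f, rfl⟩
      have hs : (0 : WithTop ℝ) ≤ ∑ j ∈ Finset.range k, B (f j) (f ((j + 1) % k)) :=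
        Finset.sum_nonneg fun j _ => hpos _ _
      rcases eq_or_ne (∑ j ∈ Finset.range k, B (f j) (f ((j + 1) % k))) ⊤ with h | h
      · rw [h]; simp
      · obtain ⟨s, hsS⟩ := WithTop.ne_top_iff_exists.mp h
        rw [← hsS, WithTop.map_coe]
        rw [← hsS] at hs
        have h0 : (0 : ℝ) ≤ s := by exact_mod_cast hs
        exact_mod_cast div_nonneg h0 (Nat.cast_nonneg k)
  · intro i j
    constructor
    · rintro ⟨σ, hσ, rfl⟩
      have hz : ∀ m, B m (σ m) = 0 := fun m =>
        (Finset.sum_eq_zero_iff_of_nonneg (fun m _ => hpos m (σ m))).mp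
          (hσ.trans hper) m (Finset.mem_univ m)
      set k := Function.minimalPeriod ⇑σ i with hkdef
      have hiper : i ∈ Function.periodicPts ⇑σ := by
        refine ⟨orderOf σ, orderOf_pos σ, ?_⟩
        show (⇑σ)^[orderOf σ] i = i
        rw [← Equiv.Perm.coe_pow, pow_orderOf_eq_one]; rfl
      have hk1 : 1 ≤ k := Function.minimalPeriod_pos_of_mem_periodicPts hiper
      have hkn : k ≤ n := by
        have hinj := Function.iterate_injOn_Iio_minimalPeriod (f := ⇑σ) (x := i)
        have hcard : (Finset.range k).card ≤ Fintype.card (Fin n) := by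
          rw [← Finset.card_image_of_injOn (s := Finset.range k)
            (f := fun l => (⇑σ)^[l] i) (fun x hx y hy hxy =>
              hinj (Finset.mem_range.mp hx) (Finset.mem_range.mp hy) hxy)]
          exact Finset.card_le_univ _
        simpa using hcard
      refine ⟨k, hk1, hkn, fun l => (⇑σ)^[l] i, ?_, 0, hk1, rfl, ?_⟩
      · refine Finset.sum_eq_zero fun l _ => ?_
        show B ((⇑σ)^[l] i) ((⇑σ)^[(l + 1) % k] i) = 0
        have e : (⇑σ)^[(l + 1) % k] i = (⇑σ)^[l + 1] i :=
          Function.iterate_mod_minimalPeriod_eq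
        rw [e, Function.iterate_succ_apply']
        exact hz _
      · show (⇑σ)^[(0 + 1) % k] i = σ i
        rw [Function.iterate_mod_minimalPeriod_eq]
        simp
    · rintro ⟨k, hk1, hkn, f, hsum, l, hl, hfi, hfj⟩
      have harc : ∀ m < k, B (f m) (f ((m + 1) % k)) = 0 := fun m hm =>
        (Finset.sum_eq_zero_iff_of_nonneg (fun m _ => hpos _ _)).mp hsum m
          (Finset.mem_range.mpr hm)
      have hkpos : 0 < k := hk1
      set F : ℕ → Fin n := fun m => f ((l + m) % k) with hF
      have harcF : ∀ m < k, B (F m) (F ((m + 1) % k)) = 0 := by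
        intro m hm
        have e : (l + (m + 1) % k) % k = ((l + m) % k + 1) % k := by
          rw [Nat.add_mod_mod, Nat.mod_add_mod]
          rfl
        show B (f ((l + m) % k)) (f ((l + (m + 1) % k) % k)) = 0
        rw [e]
        exact harc _ (Nat.mod_lt _ hkpos)
      obtain ⟨σ, hσ, hσ0⟩ := walk k hk1 F harcF
      refine ⟨σ, ?_, ?_⟩
      · rw [hper]; exact Finset.sum_eq_zero fun m _ => hσ m
      · have e0 : F 0 = i := by
          show f ((l + 0) % k) = i
          rw [Nat.add_zero, Nat.mod_eq_of_lt hl]; exact hfi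
        have e1 : F (1 % k) = j := by
          show f ((l + 1 % k) % k) = j
          rw [Nat.add_mod_mod]; exact hfj
        rw [e0, e1] at hσ0; exact hσ0

/-- If `per B = 0`, the pair of zero vectors is Hungarian (i.e. all entries of
`B` are `≥ 0`) and the identity permutation is optimal, then all diagonal
entries of `B` vanish (so the zero vector is a min-plus eigenvector:
`minⱼ B_{ij} = 0` for all `i`), the minimal circuit mean of `B` is `0`, and
`Opt(B)` coincides with the critical graph of `B` (the union of all circuits of
weight, equivalently mean weight, `0`). -/
theorem stmt_17 (n : ℕ) (hn : 0 < n) (B : Matrix (Fin n) (Fin n) (WithTop ℝ))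
    (hper : mpPer n B = 0)
    (hpos : ∀ i j, (0 : WithTop ℝ) ≤ B i j)
    (hid : (∑ i, B i i) = mpPer n B) :
    (∀ i, B i i = 0) ∧
    (∀ i, ((Finset.univ : Finset (Fin n)).inf fun j => B i j) = 0) ∧
    IsLeast {t : WithTop ℝ | ∃ k : ℕ, 1 ≤ k ∧ k ≤ n ∧ ∃ f : ℕ → Fin n,
        t = WithTop.map (fun r : ℝ => r / (k : ℝ))
          (∑ j ∈ Finset.range k, B (f j) (f ((j + 1) % k)))} 0 ∧
    (∀ i j, OptArc n B i j ↔
      ∃ k : ℕ, 1 ≤ k ∧ k ≤ n ∧ ∃ f : ℕ → Fin n,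
        (∑ l ∈ Finset.range k, B (f l) (f ((l + 1) % k))) = 0 ∧
        ∃ l, l < k ∧ f l = i ∧ f ((l + 1) % k) = j) := by
  have hdiag : ∀ i, B i i = 0 := by
    intro i
    exact (Finset.sum_eq_zero_iff_of_nonneg (fun j _ => hpos j j)).mp
      (hid.trans hper) i (Finset.mem_univ i)
  obtain ⟨h1, h2, h3, h4⟩ := stmt_17' n hn B
    (exists_zero_perm_of_walk n B hdiag) (mpPer n B) hper hpos hid
  exact ⟨h1, h2, h3, fun i j => h4 i j⟩
end

section
/- Let \(B\in(\mathbb R\cup\{+\infty\})^{n\times n}\) with \(\mathrm{per}\,B\ne+\infty\), let (U,V) be a Hungarian pair with respect to B, and suppose the identity permutation is optimal for B. Then Opt(B) is the disjoint union of the strongly connected components of the saturation graph Sat(B,U,V): an arc of Sat(B,U,V) belongs to Opt(B) if and only if it lies in a strongly connected component of Sat(B,U,V). -/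
open scoped Classical

/-- `(U,V)` is a Hungarian pair with respect to `B`. -/
def HungPair (n : ℕ) (B : Matrix (Fin n) (Fin n) (WithTop ℝ)) (U V : Fin n → ℝ) : Prop :=
  (∀ i j, ((U i + V j : ℝ) : WithTop ℝ) ≤ B i j) ∧
  ((∑ i, U i + ∑ j, V j : ℝ) : WithTop ℝ) = mpPer n B

/-- `(i,j)` is an arc of the saturation graph `Sat(B,U,V)`. -/
def SatArc (n : ℕ) (B : Matrix (Fin n) (Fin n) (WithTop ℝ)) (U V : Fin n → ℝ)
    (i j : Fin n) : Prop :=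
  B i j = ((U i + V j : ℝ) : WithTop ℝ)

/-- Any `r`-chain can be shortened to a duplicate-free `r`-chain with the
same endpoints. -/
lemma exists_nodup_chain_aux {α : Type*} {r : α → α → Prop} :
    ∀ (l : List α) (a : α), List.Chain r a l →
      ∃ m : List α, List.Chain r a m ∧
        (a :: m).getLast (List.cons_ne_nil _ _) = (a :: l).getLast (List.cons_ne_nil _ _) ∧
        (a :: m).Nodup := by
  intro l
  induction l with
  | nil =>
    intro a _
    exact ⟨[], List.Chain.nil, rfl, List.nodup_singleton a⟩
  | cons b t ih =>
    intro a hch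
    rw [List.Chain, List.chain_cons] at hch
    obtain ⟨hab, hbt⟩ := hch
    obtain ⟨m, hm, hlast, hnod⟩ := ih b hbt
    by_cases ha : a ∈ b :: m
    · -- cut the chain at the occurrence of `a`
      obtain ⟨s, t', hst⟩ := List.append_of_mem ha
      have hsuf : (a :: t') <:+ (b :: m) := ⟨s, hst.symm⟩
      have hchain' : List.Chain' r (b :: m) := hm
      have hchain'' : List.Chain' r (a :: t') := hchain'.suffix hsuf
      have hnod' : (a :: t').Nodup := hnod.sublist hsuf.sublist
      refine ⟨t', hchain'', ?_, hnod'⟩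
      have h1 : (b :: m).getLast (List.cons_ne_nil _ _)
          = (a :: t').getLast (List.cons_ne_nil _ _) :=
        (List.getLast_congr _ (by simp) hst).trans
          (List.getLast_append_right (l := s) (List.cons_ne_nil a t'))
      rw [List.getLast_cons_cons]
      exact h1.symm.trans hlast
    · refine ⟨b :: m, List.Chain.cons hab hm, ?_, ?_⟩
      · rw [List.getLast_cons_cons, List.getLast_cons_cons, hlast]
      · exact List.nodup_cons.mpr ⟨ha, hnod⟩

/-- If a list is duplicate-free, forms an `r`-chain, wraps around with an
`r`-arc from its last element to its head, and `r` is reflexive on the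
diagonal, then `formPerm` of the list moves every point along an `r`-arc. -/
lemma formPerm_rel {α : Type*} [DecidableEq α] {r : α → α → Prop} (c : List α)
    (hn : c.Nodup) (hc : List.Chain' r c)
    (hwrap : ∀ h : c ≠ [], r (c.getLast h) (c.head h))
    (hdiag : ∀ x, r x x) : ∀ x, r x (c.formPerm x) := by
  intro x
  by_cases hx : x ∈ c
  · obtain ⟨k, hk, hxk⟩ := List.getElem_of_mem hx
    subst hxk
    rw [List.formPerm_apply_getElem c hn k hk]
    rcases Nat.lt_or_ge (k + 1) c.length with hlt | hge
    · have hmod : (k + 1) % c.length = k + 1 := Nat.mod_eq_of_lt hlt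
      have h2 := List.isChain_iff_getElem.mp hc k (by omega)
      simp only [hmod]
      exact h2
    · have hkeq : k + 1 = c.length := by omega
      have hmod : (k + 1) % c.length = 0 := by rw [hkeq, Nat.mod_self]
      have hne : c ≠ [] := List.ne_nil_of_length_pos (by omega)
      have h2 := hwrap hne
      rw [List.getLast_eq_getElem, List.head_eq_getElem] at h2
      simp only [hmod]
      convert h2 using 2
      omega
  · rw [List.formPerm_apply_of_notMem hx]
    exact hdiag x

/-- If the identity permutation is optimal for `B`, then `Opt(B)` is the
disjoint union of the strongly connected components of `Sat(B,U,V)`: an arc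
`(i,j)` belongs to `Opt(B)` iff it is a saturated arc lying in a strongly
connected component, i.e. there is also a saturated path from `j` back to `i`. -/
theorem stmt_18 (n : ℕ) (B : Matrix (Fin n) (Fin n) (WithTop ℝ))
    (hper : mpPer n B ≠ ⊤) (U V : Fin n → ℝ) (hUV : HungPair n B U V)
    (hid : (∑ i, B i i) = mpPer n B) :
    ∀ i j, OptArc n B i j ↔
      (SatArc n B U V i j ∧ Relation.ReflTransGen (SatArc n B U V) j i) := by
  obtain ⟨hle, hsum⟩ := hUV
  set Sat := SatArc n B U V with hSat
  -- a permutation all of whose arcs are saturated is optimal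
  have sat_sum : ∀ σ : Equiv.Perm (Fin n), (∀ k, Sat k (σ k)) →
      (∑ k, B k (σ k)) = mpPer n B := by
    intro σ h
    have h1 : (∑ k, B k (σ k)) = ((∑ k, (U k + V (σ k)) : ℝ) : WithTop ℝ) := by
      rw [WithTop.coe_sum]
      exact Finset.sum_congr rfl fun k _ => h k
    have h2 : (∑ k, (U k + V (σ k)) : ℝ) = ∑ k, U k + ∑ k, V k := by
      rw [Finset.sum_add_distrib, Equiv.sum_comp σ V]
    rw [h1, h2, hsum]
  -- an optimal permutation has all arcs saturated
  have opt_sat : ∀ σ : Equiv.Perm (Fin n), (∑ k, B k (σ k)) = mpPer n B →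
      ∀ k, Sat k (σ k) := by
    intro σ hσ
    have hne : ∀ k, B k (σ k) ≠ ⊤ := by
      intro k hk
      apply hper
      rw [← hσ, WithTop.sum_eq_top]
      exact ⟨k, Finset.mem_univ k, hk⟩
    set b : Fin n → ℝ := fun k => (B k (σ k)).untop (hne k) with hb
    have hbk : ∀ k, B k (σ k) = ((b k : ℝ) : WithTop ℝ) := fun k =>
      (WithTop.coe_untop _ (hne k)).symm
    have hsum2 : ∑ k, b k = ∑ k, (U k + V (σ k)) := by
      have h2 : (∑ k, (U k + V (σ k)) : ℝ) = ∑ k, U k + ∑ k, V k := by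
        rw [Finset.sum_add_distrib, Equiv.sum_comp σ V]
      have : ((∑ k, b k : ℝ) : WithTop ℝ) = ((∑ k, (U k + V (σ k)) : ℝ) : WithTop ℝ) := by
        rw [WithTop.coe_sum, WithTop.coe_sum]
        calc (∑ k, ((b k : ℝ) : WithTop ℝ)) = ∑ k, B k (σ k) := by
              exact Finset.sum_congr rfl fun k _ => (hbk k).symm
          _ = mpPer n B := hσ
          _ = ((∑ i, U i + ∑ j, V j : ℝ) : WithTop ℝ) := hsum.symm
          _ = ∑ k, (((U k + V (σ k) : ℝ)) : WithTop ℝ) := by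
              rw [← WithTop.coe_sum, h2]
      exact_mod_cast this
    have hpt : ∀ k ∈ Finset.univ, (U k + V (σ k)) ≤ b k := by
      intro k _
      have := hle k (σ k)
      rw [hbk k] at this
      exact_mod_cast this
    have heq := (Finset.sum_eq_sum_iff_of_le hpt).mp hsum2.symm
    intro k
    have := heq k (Finset.mem_univ k)
    rw [hSat]
    unfold SatArc
    rw [hbk k, this]
  -- the diagonal is saturated
  have sat_diag : ∀ k, Sat k k := by
    intro k
    have h1 : (∑ k, B k ((1 : Equiv.Perm (Fin n)) k)) = mpPer n B := by
      simpa using hid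
    have := opt_sat 1 h1 k
    simpa using this
  intro i j
  constructor
  · rintro ⟨σ, hσ, hσi⟩
    have hsat := opt_sat σ hσ
    constructor
    · have := hsat i
      rwa [hσi] at this
    · -- follow the orbit of σ from j back to i
      have key : ∀ m : ℕ, Relation.ReflTransGen Sat j ((σ ^ m) j) := by
        intro m
        induction m with
        | zero => simp [Relation.ReflTransGen.refl]
        | succ m ihm =>
          refine ihm.tail ?_
          have harc := hsat ((σ ^ m) j)
          have : (σ ^ (m + 1)) j = σ ((σ ^ m) j) := by
            rw [pow_succ', Equiv.Perm.mul_apply]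
          rw [this]
          exact harc
      have hpos : 0 < orderOf σ := orderOf_pos σ
      have hfix : (σ ^ (orderOf σ - 1)) j = i := by
        have h1 : (σ ^ orderOf σ) i = i := by rw [pow_orderOf_eq_one]; rfl
        have h2 : (σ ^ (orderOf σ - 1)) (σ i) = (σ ^ orderOf σ) i := by
          rw [← Equiv.Perm.mul_apply, ← pow_succ, Nat.sub_add_cancel hpos]
        rw [← hσi, h2, h1]
      have := key (orderOf σ - 1)
      rwa [hfix] at this
  · rintro ⟨hsat, hpath⟩
    by_cases hij : i = j
    · subst hij
      refine ⟨1, ?_, rfl⟩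
      simpa using hid
    · obtain ⟨l, hchain, hlast⟩ := List.exists_isChain_cons_of_relationReflTransGen hpath
      obtain ⟨m, hm, hmlast, hmnod⟩ := exists_nodup_chain_aux l j hchain
      rw [hlast] at hmlast
      -- m is nonempty since the chain ends at i ≠ j
      have hmne : m ≠ [] := by
        intro h
        subst h
        simp at hmlast
        exact hij hmlast.symm
      set w : List (Fin n) := j :: m with hw
      have hwne : w ≠ [] := List.cons_ne_nil _ _
      have hwlast : w.getLast hwne = i := hmlast
      -- decompose w = w.dropLast ++ [i]
      have hdecomp : w.dropLast ++ [i] = w := by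
        rw [← hwlast]; exact List.dropLast_append_getLast hwne
      -- the cycle list
      set c : List (Fin n) := i :: w.dropLast with hc
      have hdl_head : w.dropLast = j :: m.dropLast := by
        obtain ⟨b, t, rfl⟩ := List.exists_cons_of_ne_nil hmne
        rfl
      -- c is nodup
      have hidl : i ∉ w.dropLast := by
        intro hmem
        have hnd : (w.dropLast ++ [i]).Nodup := by rw [hdecomp]; exact hmnod
        rw [List.nodup_append] at hnd
        exact hnd.2.2 i hmem i (List.mem_singleton_self i) rfl
      have hcnod : c.Nodup := by
        refine List.nodup_cons.mpr ⟨hidl, ?_⟩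
        exact hmnod.sublist (List.dropLast_sublist w)
      -- c is a chain
      have hwchain : List.Chain' Sat w := hm
      have hcchain : List.Chain' Sat c := by
        refine List.isChain_cons.mpr ⟨?_, hwchain.dropLast⟩
        intro y hy
        rw [hdl_head] at hy
        simp only [List.head?_cons, Option.mem_def, Option.some_inj] at hy
        rw [← hy]
        exact hsat
      -- the wrap-around arc
      have hcwrap : ∀ h : c ≠ [], Sat (c.getLast h) (c.head h) := by
        intro h
        have hdlne : w.dropLast ≠ [] := by rw [hdl_head]; exact List.cons_ne_nil _ _
        have h1 : c.getLast h = w.dropLast.getLast hdlne :=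
          List.getLast_cons hdlne
        have h2 : c.head h = i := rfl
        rw [h1, h2]
        -- last arc of the chain w
        have := hwchain
        rw [← hdecomp] at this
        rw [List.Chain', List.isChain_append] at this
        refine this.2.2 _ ?_ i ?_
        · rw [List.getLast?_eq_getLast_of_ne_nil hdlne]; rfl
        · rfl
      have hall := formPerm_rel c hcnod hcchain hcwrap sat_diag
      refine ⟨c.formPerm, sat_sum _ hall, ?_⟩
      have : c = i :: j :: m.dropLast := by rw [hc, hdl_head]
      rw [this] at hcnod ⊢
      exact List.formPerm_apply_head i j m.dropLast hcnod
end
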